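/- arXiv:2103.06155 — 8 statements merged into one kernel-verified Lean document; each statement's English description precedes it below -/
import Mathlib

section
/- A small coproduct of representable natural transformations of presheaves is representable: if (p_i : Y_i → X_i) is an I-indexed family of representable natural transformations over a small category C, then the induced map ∑_i Y_i → ∑_i X_i is representable. -/
open CategoryTheory Limits Opposite

universe u

/-- The value of a coproduct of presheaves at an object is equivalent to the sigma type,
compatibly with the coproduct inclusions. -/
theorem sigmaObjEquiv_exists {C : Type u} [SmallCategory C] {I : Type u}
    (Z : I → Cᵒᵖ ⥤ Type u) (k : Cᵒᵖ) :
    ∃ e : (∐ Z).obj k ≃ Σ j, (Z j).obj k,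
      ∀ (j : I) (a : (Z j).obj k), e ((Sigma.ι Z j).app k a) = ⟨j, a⟩ := by
  let G := (evaluation Cᵒᵖ (Type u)).obj k
  let e₁ : G.obj (∐ Z) ≅ colimit (Discrete.functor Z ⋙ G) :=
    preservesColimitIso G (Discrete.functor Z)
  let e₂ : colimit (Discrete.functor Z ⋙ G) ≅ ∐ (fun j => (Z j).obj k) :=
    HasColimit.isoOfNatIso (Discrete.natIso fun j => Iso.refl _)
  let e₃ : (∐ (fun j => (Z j).obj k)) ≅ Σ j, (Z j).obj k :=
    Types.coproductIso _
  refine ⟨(e₁ ≪≫ e₂ ≪≫ e₃).toEquiv, fun j a => ?_⟩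
  have h₁ : (Sigma.ι Z j).app k ≫ e₁.hom = colimit.ι (Discrete.functor Z ⋙ G) ⟨j⟩ :=
    ι_preservesColimitIso_hom G (Discrete.functor Z) ⟨j⟩
  have h₂ : colimit.ι (Discrete.functor Z ⋙ G) ⟨j⟩ ≫ e₂.hom =
      Sigma.ι (fun j => (Z j).obj k) j := by
    simp [e₂, Sigma.ι]
  have h₃ : Sigma.ι (fun j => (Z j).obj k) j ≫ e₃.hom =
      fun x => (⟨j, x⟩ : Σ j, (Z j).obj k) := by
    funext x
    simp [e₃]
  have : (Sigma.ι Z j).app k ≫ (e₁ ≪≫ e₂ ≪≫ e₃).hom =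
      fun x => (⟨j, x⟩ : Σ j, (Z j).obj k) := by
    simp only [Iso.trans_hom, ← Category.assoc, h₁]
    rw [Category.assoc, ← h₃, ← h₂]
    simp
  exact congrFun this a

theorem isPullback_ι_sigmaMap {C : Type u} [SmallCategory C] {I : Type u}
    {X Y : I → Cᵒᵖ ⥤ Type u} (p : ∀ i, Y i ⟶ X i) (i : I) :
    IsPullback (Sigma.ι Y i) (p i) (Limits.Sigma.map p) (Sigma.ι X i) := by
  have w : Sigma.ι Y i ≫ Limits.Sigma.map p = p i ≫ Sigma.ι X i := by simp
  refine IsPullback.of_isLimit (c := PullbackCone.mk _ _ w) ?_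
  refine evaluationJointlyReflectsLimits _ (fun k => ?_)
  refine (isLimitMapConePullbackConeEquiv ((evaluation Cᵒᵖ (Type u)).obj k) w).symm ?_
  refine (PullbackCone.isLimitEquivBijective _).symm ?_
  obtain ⟨eY, hY⟩ := sigmaObjEquiv_exists Y k
  obtain ⟨eX, hX⟩ := sigmaObjEquiv_exists X k
  have hmap : ∀ (j : I) (a : (Y j).obj k),
      (Limits.Sigma.map p).app k ((Sigma.ι Y j).app k a) =
        (Sigma.ι X j).app k ((p j).app k a) := by
    intro j a
    have := congrArg (fun t => t.app k a)
      (show Sigma.ι Y j ≫ Limits.Sigma.map p = p j ≫ Sigma.ι X j by simp)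
    simpa only [NatTrans.comp_app, types_comp_apply] using this
  constructor
  · intro a b hab
    have h1 : (Sigma.ι Y i).app k a = (Sigma.ι Y i).app k b :=
      congrArg (fun t => t.1.1) hab
    have h2 : (⟨i, a⟩ : Σ j, (Y j).obj k) = ⟨i, b⟩ := by
      rw [← hY i a, ← hY i b, h1]
    exact eq_of_heq (Sigma.mk.inj_iff.mp h2).2
  · rintro ⟨⟨t, b⟩, hc⟩
    simp only at hc
    rcases h' : eY t with ⟨j, a⟩
    have ht : (Sigma.ι Y j).app k a = t := by
      apply eY.injective
      rw [hY j a, h']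
    have hc2 : (Limits.Sigma.map p).app k t = (Sigma.ι X i).app k b := hc
    have hc' : (⟨j, (p j).app k a⟩ : Σ j, (X j).obj k) = ⟨i, b⟩ := by
      rw [← hX j ((p j).app k a), ← hX i b, ← hmap, ht, hc2]
    obtain ⟨rfl, hba⟩ := Sigma.mk.inj_iff.mp hc'
    refine ⟨a, ?_⟩
    apply Subtype.ext
    apply Prod.ext
    · exact ht
    · exact eq_of_heq hba

/-- A natural transformation of presheaves `f : Y ⟶ X` is *representable* if every fibre of `f`
over an element of `X` at a representable presheaf is a pullback of a morphism between
representable presheaves. -/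
def RepresentableNatTrans {C : Type u} [SmallCategory C] {X Y : Cᵒᵖ ⥤ Type u} (f : Y ⟶ X) : Prop :=
  ∀ (A : C) (x : yoneda.obj A ⟶ X), ∃ (B : C) (g : B ⟶ A) (y : yoneda.obj B ⟶ Y),
    IsPullback y (yoneda.map g) f x

/-- A small coproduct of representable natural transformations of presheaves is representable. -/
theorem RepresentableNatTrans.sigmaMap {C : Type u} [SmallCategory C] {I : Type u}
    {X Y : I → Cᵒᵖ ⥤ Type u} (p : ∀ i, Y i ⟶ X i) (hp : ∀ i, RepresentableNatTrans (p i)) :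
    RepresentableNatTrans (Limits.Sigma.map p) := by
  intro A x
  obtain ⟨eX, hX⟩ := sigmaObjEquiv_exists X (op A)
  rcases h' : eX (yonedaEquiv x) with ⟨i, xi⟩
  have hx : x = yonedaEquiv.symm xi ≫ Sigma.ι X i := by
    apply yonedaEquiv.injective
    rw [yonedaEquiv_comp]
    apply eX.injective
    rw [h', Equiv.apply_symm_apply, hX]
  obtain ⟨B, g, y, hpb⟩ := hp i A (yonedaEquiv.symm xi)
  refine ⟨B, g, y ≫ Sigma.ι Y i, ?_⟩
  rw [hx]
  exact hpb.paste_horiz (isPullback_ι_sigmaMap p i)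
end

section
/- If p is a representable natural transformation between presheaves over a small category C, then the polynomial endofunctor P_p = Σ_X ∘ Π_p ∘ Δ_Y (sending Z to Σ_{A : X} Z^{p⁻¹(A)}) on Psh(C) preserves all colimits. -/
open CategoryTheory Limits Opposite

universe u

namespace PolyAux

/-- Morphisms `T ⟶ A.left` correspond to pairs of a morphism `x : T ⟶ X` together with a
morphism `Over.mk x ⟶ A` in `Over X`. -/
@[simps]
def homOverEquiv {D : Type*} [Category D] {X T : D} (A : Over X) :
    (T ⟶ A.left) ≃ Σ x : T ⟶ X, (Over.mk x ⟶ A) where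
  toFun f := ⟨f ≫ A.hom, Over.homMk f⟩
  invFun s := s.2.left
  left_inv f := rfl
  right_inv := by
    rintro ⟨x, u⟩
    refine Sigma.ext (Over.w u) ?_
    have : ∀ {x x' : T ⟶ X} (h : x = x') (u : Over.mk x ⟶ A) (u' : Over.mk x' ⟶ A),
        u.left = u'.left → HEq u u' := by
      rintro x x' rfl u u' hl
      exact heq_of_eq (by ext; exact hl)
    exact this (Over.w u) _ u rfl

variable {C : Type u} [SmallCategory C] {X Y : Cᵒᵖ ⥤ Type u}

variable (X) in
/-- The functor `Z ↦ Σ x, Z (B x)`. -/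
@[simps]
def sigmaFunctor {c : C} (B : (yoneda.obj c ⟶ X) → C) : (Cᵒᵖ ⥤ Type u) ⥤ Type u where
  obj Z := Σ x : yoneda.obj c ⟶ X, Z.obj (op (B x))
  map f := TypeCat.ofHom fun s => ⟨s.1, f.app _ s.2⟩

variable (X) in
/-- The functor `Z ↦ (x ↦ Z (B x))` into the functor category on the discrete index. -/
@[simps]
def discFunctor {c : C} (B : (yoneda.obj c ⟶ X) → C) :
    (Cᵒᵖ ⥤ Type u) ⥤ (Discrete (yoneda.obj c ⟶ X) ⥤ Type u) where
  obj Z := Discrete.functor fun x => Z.obj (op (B x))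
  map f := Discrete.natTrans fun x => f.app _

/-- The sigma functor is the composite of `discFunctor` with `colim`. -/
noncomputable def discIso {c : C} (B : (yoneda.obj c ⟶ X) → C) :
    discFunctor X B ⋙ colim ≅ sigmaFunctor X B :=
  NatIso.ofComponents (fun Z => Types.coproductIso fun x => Z.obj (op (B x))) (by
    intro Z Z' f
    apply colimit.hom_ext
    rintro ⟨x⟩
    simp only [Functor.comp_map, colim_map, ι_colimMap_assoc, Types.coproductIso,
      colimit.isoColimitCocone_ι_hom, colimit.isoColimitCocone_ι_hom_assoc]
    erw [colimit.isoColimitCocone_ι_hom, colimit.isoColimitCocone_ι_hom_assoc]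
    rfl)

lemma sigmaFunctor_preservesColimits {c : C} (B : (yoneda.obj c ⟶ X) → C) :
    PreservesColimitsOfSize.{u, u} (sigmaFunctor X B) := by
  haveI h1 : PreservesColimitsOfSize.{u, u} (discFunctor X B) :=
    preservesColimits_of_evaluation _ (fun x =>
      preservesColimits_of_natIso
        (F := (evaluation Cᵒᵖ (Type u)).obj (op (B x.as)))
        (NatIso.ofComponents (fun Z => Iso.refl _) (by aesop_cat)))
  haveI h2 : PreservesColimitsOfSize.{u, u}
      (colim : (Discrete (yoneda.obj c ⟶ X) ⥤ Type u) ⥤ Type u) :=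
    colimConstAdj.leftAdjoint_preservesColimits
  exact preservesColimits_of_natIso (discIso B)

variable (p : Y ⟶ X) (Pi : Over Y ⥤ Over X) (adj : Over.pullback p ⊣ Pi)
  {c : C} {B : (yoneda.obj c ⟶ X) → C} (y : ∀ x : yoneda.obj c ⟶ X, yoneda.obj (B x) ⟶ Y)
  (e : ∀ x : yoneda.obj c ⟶ X, Over.mk (y x) ≅ (Over.pullback p).obj (Over.mk x))

/-- The key computation: the value of the polynomial functor at `c` is the sigma type. -/
noncomputable def mainEquiv (Z : Cᵒᵖ ⥤ Type u) :
    ((Pi.obj ((Over.star Y).obj Z)).left).obj (op c) ≃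
      Σ x : yoneda.obj c ⟶ X, Z.obj (op (B x)) :=
  yonedaEquiv.symm.trans <|
    (homOverEquiv (Pi.obj ((Over.star Y).obj Z))).trans <|
      Equiv.sigmaCongrRight fun x =>
        (adj.homEquiv (Over.mk x) ((Over.star Y).obj Z)).symm.trans <|
          (Iso.homFromEquiv (e x).symm).trans <|
            (((Over.forgetAdjStar Y).homEquiv (Over.mk (y x)) Z).symm.trans yonedaEquiv)

lemma mainEquiv_symm_naturality {Z Z' : Cᵒᵖ ⥤ Type u} (f : Z ⟶ Z')
    (s : Σ x : yoneda.obj c ⟶ X, Z.obj (op (B x))) :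
    (mainEquiv p Pi adj y e Z').symm ((sigmaFunctor X B).map f s) =
      ((Pi.map ((Over.star Y).map f)).left).app (op c)
        ((mainEquiv p Pi adj y e Z).symm s) := by
  obtain ⟨x, z⟩ := s
  show yonedaEquiv ((adj.homEquiv _ _ ((e x).inv ≫
      ((Over.forgetAdjStar Y).homEquiv _ _) (yonedaEquiv.symm (f.app _ z)))).left) =
    ((Pi.map ((Over.star Y).map f)).left).app (op c)
      (yonedaEquiv ((adj.homEquiv _ _ ((e x).inv ≫
        ((Over.forgetAdjStar Y).homEquiv _ _) (yonedaEquiv.symm z))).left))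
  rw [← yonedaEquiv_symm_naturality_right]
  have key : ((Over.forgetAdjStar Y).homEquiv (Over.mk (y x)) Z') (yonedaEquiv.symm z ≫ f)
      = ((Over.forgetAdjStar Y).homEquiv (Over.mk (y x)) Z) (yonedaEquiv.symm z) ≫
        (Over.star Y).map f :=
    Adjunction.homEquiv_naturality_right _ _ _
  erw [key]
  rw [← Category.assoc, adj.homEquiv_naturality_right, Over.comp_left, yonedaEquiv_comp]

end PolyAux

open PolyAux in
/-- If `p` is a representable natural transformation of presheaves, then the polynomial
endofunctor `P_p = Σ_{X → 1} ∘ Π_p ∘ Δ_{Y → 1}` of the locally cartesian closed category of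
presheaves preserves all colimits.  Here `Δ_{Y → 1}` is `Over.star Y` (pullback along `Y ⟶ 1`),
`Π_p : Over Y ⥤ Over X` is any right adjoint of the pullback functor `Over.pullback p`, and
`Σ_{X → 1}` is the forgetful functor `Over X ⥤ Psh(C)`. -/
theorem polynomial_extension_preservesColimits {C : Type u} [SmallCategory C]
    {X Y : Cᵒᵖ ⥤ Type u} (p : Y ⟶ X) (hp : RepresentableNatTrans p)
    (Pi : Over Y ⥤ Over X) (adj : Over.pullback p ⊣ Pi) :
    Nonempty (PreservesColimits (Over.star Y ⋙ Pi ⋙ Over.forget X)) := by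
  choose B g y hpb using hp
  constructor
  apply preservesColimits_of_evaluation
  rintro ⟨c⟩
  have e : ∀ x : yoneda.obj c ⟶ X,
      Over.mk (y c x) ≅ (Over.pullback p).obj (Over.mk x) := fun x =>
    Over.isoMk (hpb c x).flip.isoPullback (by simp)
  haveI := sigmaFunctor_preservesColimits (B c)
  exact preservesColimits_of_natIso
    (F := sigmaFunctor X (B c))
    (NatIso.ofComponents (fun Z => ((mainEquiv p Pi adj (y c) e Z).symm.toIso))
      (fun {Z Z'} f => by
        ext s
        exact mainEquiv_symm_naturality p Pi adj (y c) e f s))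
end

section
/- Let C be a small category that is Cauchy complete (all idempotents split) and has finite products, and let p : Y → X be a natural transformation of presheaves over C. If the polynomial endofunctor P_p : Psh(C) → Psh(C) is cocontinuous, then p is representable. -/
open CategoryTheory Limits Opposite

universe u

/-- Let `C` be a small Cauchy complete category (all idempotents split) with finite products.
If the polynomial endofunctor `P_p = Σ_{X → 1} ∘ Π_p ∘ Δ_{Y → 1}` of a natural transformation
`p : Y ⟶ X` of presheaves over `C` is cocontinuous, then `p` is representable.  Here
`Π_p : Over Y ⥤ Over X` is any right adjoint of the pullback functor `Over.pullback p`. -/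
theorem representable_of_polynomial_extension_preservesColimits {C : Type u} [SmallCategory C]
    [IsIdempotentComplete C] [HasFiniteProducts C]
    {X Y : Cᵒᵖ ⥤ Type u} (p : Y ⟶ X)
    (Pi : Over Y ⥤ Over X) (adj : Over.pullback p ⊣ Pi)
    (h : PreservesColimits (Over.star Y ⋙ Pi ⋙ Over.forget X)) :
    RepresentableNatTrans p := by
  intro A x
  -- the fibre of `p` over `x`
  set P' : Over Y := (Over.pullback p).obj (Over.mk x) with hP'
  set Q : Cᵒᵖ ⥤ Type u := P'.left with hQdef
  set G : (Cᵒᵖ ⥤ Type u) ⥤ (Cᵒᵖ ⥤ Type u) := Over.star Y ⋙ Pi ⋙ Over.forget X with hG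
  -- the adjunction equivalence `Hom_{Over X}(x, Pi (star F)) ≃ Hom(Q, F)`
  let Φ : ∀ F : Cᵒᵖ ⥤ Type u,
      (Over.mk x ⟶ Pi.obj ((Over.star Y).obj F)) ≃ (Q ⟶ F) := fun F =>
    ((adj.homEquiv (Over.mk x) ((Over.star Y).obj F)).symm).trans
      (((Over.forgetAdjStar Y).homEquiv P' F).symm)
  have Φnat : ∀ {F G' : Cᵒᵖ ⥤ Type u} (σ : F ⟶ G')
      (ψ : Over.mk x ⟶ Pi.obj ((Over.star Y).obj F)),
      Φ G' (ψ ≫ Pi.map ((Over.star Y).map σ)) = Φ F ψ ≫ σ := by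
    intro F G' σ ψ
    simp only [Φ, Equiv.trans_apply, Adjunction.homEquiv_naturality_right_symm]
    exact (congrArg ((Over.forgetAdjStar Y).homEquiv P' G').symm (adj.homEquiv_naturality_right_symm ψ ((Over.star Y).map σ))).trans ((Over.forgetAdjStar Y).homEquiv_naturality_right_symm _ σ)
  -- the element corresponding to `𝟙 Q`
  set ψ₀ : Over.mk x ⟶ Pi.obj ((Over.star Y).obj Q) := (Φ Q).symm (𝟙 Q) with hψ₀
  -- express `Q` as the tautological colimit of representables, apply `G` and evaluate at `A`
  have hQ := Presheaf.isColimitTautologicalCocone Q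
  haveI := h
  have hc2 : IsColimit (G.mapCocone (Presheaf.tautologicalCocone Q)) :=
    isColimitOfPreserves G hQ
  have hc3 : IsColimit (((evaluation Cᵒᵖ (Type u)).obj (op A)).mapCocone
      (G.mapCocone (Presheaf.tautologicalCocone Q))) :=
    isColimitOfPreserves _ hc2
  obtain ⟨j, w, hw⟩ := Types.jointly_surjective _ hc3 (yonedaEquiv ψ₀.left)
  set c : C := j.left with hc
  set q : yoneda.obj c ⟶ Q := j.hom with hq
  have hw' : (G.map q).app (op A) w = yonedaEquiv ψ₀.left := hw
  set s' : yoneda.obj A ⟶ G.obj (yoneda.obj c) := yonedaEquiv.symm w with hs'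
  have claim1 : s' ≫ G.map q = ψ₀.left := by
    apply yonedaEquiv.injective
    rw [yonedaEquiv_comp]
    simp only [s', Equiv.apply_symm_apply]
    exact (congrArg _ (Equiv.apply_symm_apply _ _)).trans hw'
  -- `s'` is a morphism over `X`
  have hover : s' ≫ (Pi.obj ((Over.star Y).obj (yoneda.obj c))).hom = x := by
    have h1 : (Pi.map ((Over.star Y).map q)).left ≫ (Pi.obj ((Over.star Y).obj Q)).hom
        = (Pi.obj ((Over.star Y).obj (yoneda.obj c))).hom := by
      simpa using Over.w (Pi.map ((Over.star Y).map q))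
    have h2 : ψ₀.left ≫ (Pi.obj ((Over.star Y).obj Q)).hom = x := by
      simpa using Over.w ψ₀
    calc s' ≫ (Pi.obj ((Over.star Y).obj (yoneda.obj c))).hom
        = s' ≫ (Pi.map ((Over.star Y).map q)).left
            ≫ (Pi.obj ((Over.star Y).obj Q)).hom := by exact congrArg (fun t => s' ≫ t) h1.symm
      _ = (s' ≫ G.map q) ≫ (Pi.obj ((Over.star Y).obj Q)).hom := by
            exact (Category.assoc s' (G.map q) _).symm
      _ = x := by exact (congrArg (· ≫ (Pi.obj ((Over.star Y).obj Q)).hom) claim1).trans h2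
  set ψ₁ : Over.mk x ⟶ Pi.obj ((Over.star Y).obj (yoneda.obj c)) :=
    Over.homMk s' hover with hψ₁
  have claim2 : ψ₁ ≫ Pi.map ((Over.star Y).map q) = ψ₀ := by
    apply Over.OverMorphism.ext
    exact claim1
  set σ : Q ⟶ yoneda.obj c := Φ (yoneda.obj c) ψ₁ with hσ
  have hretr : σ ≫ q = 𝟙 Q := by
    rw [hσ, ← Φnat q ψ₁, claim2, hψ₀, Equiv.apply_symm_apply]
  -- split the idempotent `q ≫ σ`
  have hretr' : ∀ {Z : Cᵒᵖ ⥤ Type u} (t : Q ⟶ Z), σ ≫ q ≫ t = t := fun t => by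
    rw [← Category.assoc, hretr, Category.id_comp]
  have hidem : (yoneda.map (yoneda.preimage (q ≫ σ))) = q ≫ σ := yoneda.map_preimage _
  set f : c ⟶ c := yoneda.preimage (q ≫ σ) with hf
  have hff : f ≫ f = f := by
    apply yoneda.map_injective
    rw [yoneda.map_comp, hidem, Category.assoc, hretr']
  obtain ⟨B, i, e, hie, hei⟩ := IsIdempotentComplete.idempotents_split c f hff
  have hie' : ∀ {Z : C} (t : B ⟶ Z), i ≫ e ≫ t = t := fun t => by
    rw [← Category.assoc, hie, Category.id_comp]
  have key1 : i ≫ f ≫ e = 𝟙 B := by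
    rw [← hei]
    simp only [Category.assoc]
    rw [hie', hie]
  set u : yoneda.obj B ⟶ Q := yoneda.map i ≫ q with hu
  set v : Q ⟶ yoneda.obj B := σ ≫ yoneda.map e with hv
  have huv : u ≫ v = 𝟙 (yoneda.obj B) := by
    rw [hu, hv, Category.assoc, ← Category.assoc q σ (yoneda.map e), ← hidem]
    simp only [← Functor.map_comp]
    rw [key1, yoneda.map_id]
  have hvu : v ≫ u = 𝟙 Q := by
    rw [hv, hu, Category.assoc, ← Category.assoc (yoneda.map e) (yoneda.map i) q,
      ← yoneda.map_comp, hei, hidem]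
    simp only [Category.assoc]
    rw [hretr', hretr]
  -- transfer the pullback square along the isomorphism `yoneda.obj B ≅ Q`
  have base : IsPullback (pullback.fst x p) (pullback.snd x p) x p :=
    IsPullback.of_hasPullback x p
  set g : B ⟶ A := yoneda.preimage (u ≫ pullback.fst x p) with hg
  have hgmap : yoneda.map g = u ≫ pullback.fst x p := yoneda.map_preimage _
  refine ⟨B, g, u ≫ pullback.snd x p, ?_⟩
  have comm : CommSq (yoneda.map g) (u ≫ pullback.snd x p) x p := ⟨by
    rw [hgmap]; simp only [Category.assoc, pullback.condition]⟩
  have main : IsPullback (yoneda.map g) (u ≫ pullback.snd x p) x p := by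
    refine IsPullback.of_iso_pullback comm ⟨u, v, huv, hvu⟩ ?_ ?_
    · exact hgmap.symm
    · rfl
  exact main.flip
end

section
/- A presheaf X on a small category C is externally tiny (the functor Hom(X, −) : Psh(C) → Set preserves all colimits) if and only if X is a retract of a representable presheaf. -/
open CategoryTheory Limits Opposite

universe u

section RetractPreserves

variable {D : Type*} {E : Type*} [Category D] [Category E]
  {F G : D ⥤ E} (σ : G ⟶ F) (ρ : F ⟶ G)

/-- A retract of a colimit cocone image is still a colimit (colimits are absolute under
functor retracts). -/
noncomputable def isColimitMapCoconeOfRetract (h : σ ≫ ρ = 𝟙 G)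
    {J : Type*} [Category J] {K : J ⥤ D} {c : Cocone K}
    (hF : IsColimit (F.mapCocone c)) : IsColimit (G.mapCocone c) where
  desc s := σ.app c.pt ≫ hF.desc ⟨s.pt, Functor.whiskerLeft K ρ ≫ s.ι⟩
  fac s j := by
    have hρ := congr_app h (K.obj j)
    have hfac := hF.fac ⟨s.pt, Functor.whiskerLeft K ρ ≫ s.ι⟩ j
    dsimp at hρ hfac ⊢
    rw [σ.naturality_assoc, hfac, ← Category.assoc, hρ, Category.id_comp]
  uniq s m hm := by
    have key : ρ.app c.pt ≫ m = hF.desc ⟨s.pt, Functor.whiskerLeft K ρ ≫ s.ι⟩ := by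
      apply hF.uniq ⟨s.pt, Functor.whiskerLeft K ρ ≫ s.ι⟩
      intro j
      have hm' := hm j
      dsimp at hm' ⊢
      rw [← Category.assoc, ρ.naturality, Category.assoc, hm']
    have hc := congr_app h c.pt
    dsimp at hc
    dsimp
    rw [← key, ← Category.assoc, hc, Category.id_comp]

noncomputable def preservesColimitsOfRetract (h : σ ≫ ρ = 𝟙 G)
    [PreservesColimitsOfSize.{u, u} F] : PreservesColimitsOfSize.{u, u} G where
  preservesColimitsOfShape := {
    preservesColimit := {
      preserves := fun hc =>
        ⟨isColimitMapCoconeOfRetract σ ρ h (isColimitOfPreserves F hc)⟩ } }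

end RetractPreserves

/-- `Hom(yA, -)` is isomorphic to evaluation at `A`. -/
noncomputable def coyonedaYonedaIsoEvaluation {C : Type u} [SmallCategory C] (A : C) :
    coyoneda.obj (op (yoneda.obj A)) ≅ (evaluation Cᵒᵖ (Type u)).obj (op A) :=
  NatIso.ofComponents (fun F => Equiv.toIso yonedaEquiv) (by
    intro F G η
    ext f
    exact yonedaEquiv_comp f η)

/-- A presheaf `X` on a small category `C` is *externally tiny* if and only if it is a retract of
a representable presheaf: the functor `Hom(X, -) : Psh(C) ⥤ Type` preserves all colimits iff
there are maps `i : X ⟶ y(A)` and `r : y(A) ⟶ X` with `i ≫ r = 𝟙 X` for some object `A`. -/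
theorem externally_tiny_iff_retract_of_representable {C : Type u} [SmallCategory C]
    (X : Cᵒᵖ ⥤ Type u) :
    Nonempty (PreservesColimits (coyoneda.obj (op X))) ↔
      ∃ (A : C) (i : X ⟶ yoneda.obj A) (r : yoneda.obj A ⟶ X), i ≫ r = 𝟙 X := by
  constructor
  · rintro ⟨hP⟩
    have hc := isColimitOfPreserves (coyoneda.obj (op X)) (Presheaf.colimitOfRepresentable X)
    obtain ⟨j, y, hy⟩ := Types.jointly_surjective _ hc (𝟙 X)
    exact ⟨j.unop.1.unop, y ≫ (uliftYonedaIsoYoneda.{u}.app _).hom,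
      (uliftYonedaIsoYoneda.{u}.app _).inv ≫ (Presheaf.coconeOfRepresentable X).ι.app j,
      (Category.assoc _ _ _).trans ((congrArg (y ≫ ·) (Iso.hom_inv_id_assoc _ _)).trans hy)⟩
  · rintro ⟨A, i, r, hir⟩
    have hev : PreservesColimitsOfSize.{u, u} (coyoneda.obj (op (yoneda.obj A))) :=
      preservesColimits_of_natIso (coyonedaYonedaIsoEvaluation A).symm
    exact ⟨preservesColimitsOfRetract (coyoneda.map r.op) (coyoneda.map i.op)
      (by rw [← coyoneda.map_comp, ← op_comp, hir, op_id, coyoneda.map_id])⟩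
end

section
/- In a locally cartesian closed category E, the Beck–Chevalley condition holds: for a pullback square with f : B → A, v : B → D, g : D → C, u : A → C (v, u the horizontal maps, f, g the vertical maps), there are natural isomorphisms Δ_g ∘ Σ_u ≅ Σ_v ∘ Δ_f and Δ_g ∘ Π_u ≅ Π_v ∘ Δ_f between functors E/A → E/D. -/
open CategoryTheory Limits Opposite

universe v u

noncomputable def beckChevalleyMap {E : Type u} [Category.{v} E] [HasPullbacks E]
    {A B C D : E} (f : B ⟶ A) (v : B ⟶ D) (g : D ⟶ C) (u : A ⟶ C)
    (sq : IsPullback v f g u) :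
    (Over.map u ⋙ Over.pullback g) ≅ (Over.pullback f ⋙ Over.map v) := by
  refine NatIso.ofComponents (fun X => ?_) (fun {X Y} k => ?_)
  · have big : IsPullback (pullback.fst X.hom f) (pullback.snd X.hom f ≫ v) (X.hom ≫ u) g :=
      (IsPullback.of_hasPullback X.hom f).paste_vert sq.flip
    exact Over.isoMk big.isoPullback.symm (by
      simp only [Iso.symm_hom]
      rw [Iso.inv_comp_eq]
      exact (big.isoPullback_hom_snd).symm ▸ rfl)
  · ext
    dsimp
    apply pullback.hom_ext
    · simp [IsPullback.isoPullback_inv_fst, pullback.condition]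
      erw [pullback.lift_fst (f := Y.hom) (g := f), pullback.lift_fst, IsPullback.isoPullback_inv_fst_assoc]
    · apply sq.hom_ext
      · simp only [Category.assoc]
        simp [IsPullback.isoPullback_inv_snd]
        erw [pullback.lift_snd_assoc (f := Y.hom) (g := f), pullback.lift_snd]
        exact (IsPullback.isoPullback_inv_snd _).symm
      · simp only [Category.assoc]
        rw [← pullback.condition]
        simp [IsPullback.isoPullback_inv_fst_assoc, IsPullback.isoPullback_inv_fst, Over.w]
        erw [pullback.lift_fst_assoc (f := Y.hom) (g := f), pullback.lift_fst_assoc]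
        simp only [Category.assoc]
        erw [IsPullback.isoPullback_inv_fst_assoc]

/-- The Beck–Chevalley condition in a locally cartesian closed category: for a pullback square
with horizontal maps `v : B ⟶ D`, `u : A ⟶ C` and vertical maps `f : B ⟶ A`, `g : D ⟶ C`,
there are natural isomorphisms `Δ_g ∘ Σ_u ≅ Σ_v ∘ Δ_f` and `Δ_g ∘ Π_u ≅ Π_v ∘ Δ_f` between
functors `E/A ⥤ E/D`.  Here `Σ` is postcomposition (`Over.map`), `Δ` is pullback
(`Over.pullback`), and `Π_u`, `Π_v` are the dependent products, i.e. the right adjoints of the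
corresponding pullback functors. -/
theorem beck_chevalley {E : Type u} [Category.{v} E] [HasPullbacks E]
    {A B C D : E} (f : B ⟶ A) (v : B ⟶ D) (g : D ⟶ C) (u : A ⟶ C)
    (sq : IsPullback v f g u)
    (Piu : Over A ⥤ Over C) (adju : Over.pullback u ⊣ Piu)
    (Piv : Over B ⥤ Over D) (adjv : Over.pullback v ⊣ Piv) :
    Nonempty ((Over.map u ⋙ Over.pullback g) ≅ (Over.pullback f ⋙ Over.map v)) ∧
    Nonempty ((Piu ⋙ Over.pullback g) ≅ (Over.pullback f ⋙ Piv)) := by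
  refine ⟨⟨beckChevalleyMap f v g u sq⟩, ⟨?_⟩⟩
  exact conjugateIsoEquiv ((Over.mapPullbackAdj g).comp adju)
    (adjv.comp (Over.mapPullbackAdj f)) (beckChevalleyMap v f u g sq.flip).symm
end

section
/- In a locally cartesian closed category, the distributivity law holds: given morphisms u : C → B and f : B → A, setting v = Π_f(u) : D → A, w = Δ_f(v) (the pullback of v along f, with projections q : P → D and e : P → C the counit component of Δ_f ⊣ Π_f applied appropriately), there is a natural isomorphism Π_f ∘ Σ_u ≅ Σ_v ∘ Π_q ∘ Δ_e of functors E/C → E/A. -/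
open CategoryTheory Limits Opposite

universe v u

namespace DistribAux

variable {E : Type u} [Category.{v} E] [HasFiniteLimits E]
  {A B C : E} (u : C ⟶ B) (f : B ⟶ A)
  (Pif : Over B ⥤ Over A) (adjf : Over.pullback f ⊣ Pif)

/-- projection morphism in `Over B`. -/
def phi (X : Over C) : (Over.map u).obj X ⟶ Over.mk u :=
  Over.homMk X.hom

/-- the lift of `Over.map u ⋙ Pif` through `Over D`. -/
noncomputable def L1 : Over C ⥤ Over (Pif.obj (Over.mk u)).left where
  obj X := Over.mk ((Pif.map (phi u X)).left)
  map {X X'} t := Over.homMk (Pif.map ((Over.map u).map t)).left (by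
    dsimp
    rw [← Over.comp_left, ← Pif.map_comp]
    congr 2
    ext
    simp [phi])
  map_id X := by ext; simp
  map_comp t s := by ext; simp

def psi (Y : Over (Pif.obj (Over.mk u)).left) :
    Over.mk (Y.hom ≫ (Pif.obj (Over.mk u)).hom) ⟶ Pif.obj (Over.mk u) :=
  Over.homMk Y.hom

def theta {Y Y' : Over (Pif.obj (Over.mk u)).left} (t : Y ⟶ Y') :
    Over.mk (Y.hom ≫ (Pif.obj (Over.mk u)).hom) ⟶
      Over.mk (Y'.hom ≫ (Pif.obj (Over.mk u)).hom) :=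
  Over.homMk t.left (by simp only [Over.mk_hom]; rw [← Category.assoc, Over.w t])

lemma theta_comp_psi {Y Y' : Over (Pif.obj (Over.mk u)).left} (t : Y ⟶ Y') :
    theta u Pif t ≫ psi u Pif Y' = psi u Pif Y := by
  ext; simp [theta, psi, Over.w t]

/-- concrete left adjoint of `L1`. -/
noncomputable def M' : Over (Pif.obj (Over.mk u)).left ⥤ Over C where
  obj Y := Over.mk (((Over.pullback f).map (psi u Pif Y) ≫ adjf.counit.app (Over.mk u)).left)
  map {Y Y'} t := Over.homMk ((Over.pullback f).map (theta u Pif t)).left (by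
    simp only [Over.mk_hom]
    rw [← Over.comp_left, ← Category.assoc, ← Functor.map_comp,
      theta_comp_psi])
  map_id Y := by
    ext
    simp only [Over.homMk_left, Over.id_left]
    rw [show theta u Pif (𝟙 Y) = 𝟙 _ by ext; simp [theta], CategoryTheory.Functor.map_id]
    rfl
  map_comp t s := by
    ext
    simp only [Over.homMk_left, Over.comp_left]
    rw [show theta u Pif (t ≫ s) = theta u Pif t ≫ theta u Pif s by ext; simp [theta],
      CategoryTheory.Functor.map_comp]
    rfl


lemma homEquiv_counit_app :
    adjf.homEquiv _ (Over.mk u) (adjf.counit.app (Over.mk u)) = 𝟙 (Pif.obj (Over.mk u)) := by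
  rw [Adjunction.homEquiv_unit]; simp

lemma homEquiv_proj (Y : Over (Pif.obj (Over.mk u)).left) :
    adjf.homEquiv _ (Over.mk u) ((Over.pullback f).map (psi u Pif Y) ≫ adjf.counit.app (Over.mk u)) =
      psi u Pif Y := by
  rw [Adjunction.homEquiv_naturality_left, homEquiv_counit_app, Category.comp_id]

lemma counit_left_comp :
    (adjf.counit.app (Over.mk u)).left ≫ u = pullback.snd (Pif.obj (Over.mk u)).hom f := by
  simpa using Over.w (adjf.counit.app (Over.mk u))

lemma M'_obj_hom (Y : Over (Pif.obj (Over.mk u)).left) :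
    ((M' u f Pif adjf).obj Y).hom =
      ((Over.pullback f).map (psi u Pif Y)).left ≫ (adjf.counit.app (Over.mk u)).left := by
  simp only [M', Over.mk_hom, Over.comp_left]

lemma L1_obj_hom (X : Over C) :
    ((L1 u Pif).obj X).hom = (Pif.map (phi u X)).left := by
  simp only [L1, Over.mk_hom]

/-- repackage a morphism out of `M'.obj Y` as a morphism in `Over B`. -/
noncomputable def fwdHom {Y : Over (Pif.obj (Over.mk u)).left} {X : Over C}
    (k : (M' u f Pif adjf).obj Y ⟶ X) :
    (Over.pullback f).obj (Over.mk (Y.hom ≫ (Pif.obj (Over.mk u)).hom)) ⟶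
      (Over.map u).obj X :=
  Over.homMk k.left (by
    have hk := Over.w k
    rw [M'_obj_hom] at hk
    have h1 : ((Over.pullback f).map (psi u Pif Y)).left ≫
        pullback.snd (Pif.obj (Over.mk u)).hom f =
        pullback.snd (Y.hom ≫ (Pif.obj (Over.mk u)).hom) f := by
      simpa using Over.w ((Over.pullback f).map (psi u Pif Y))
    simp only [Over.map_obj_hom, Over.pullback_obj_hom, Over.mk_hom]
    erw [← Category.assoc, hk, Category.assoc, counit_left_comp, h1])

lemma fwdHom_comp_phi {Y : Over (Pif.obj (Over.mk u)).left} {X : Over C}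
    (k : (M' u f Pif adjf).obj Y ⟶ X) :
    fwdHom u f Pif adjf k ≫ phi u X =
      (Over.pullback f).map (psi u Pif Y) ≫ adjf.counit.app (Over.mk u) := by
  ext
  have hk := Over.w k
  rw [M'_obj_hom] at hk
  simp only [Over.comp_left, fwdHom, phi, Over.homMk_left]
  exact hk

/-- forward direction of the sliced adjunction hom equivalence. -/
noncomputable def fwd {Y : Over (Pif.obj (Over.mk u)).left} {X : Over C}
    (k : (M' u f Pif adjf).obj Y ⟶ X) : Y ⟶ (L1 u Pif).obj X :=
  Over.homMk (adjf.homEquiv _ ((Over.map u).obj X) (fwdHom u f Pif adjf k)).left (by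
    have h : adjf.homEquiv _ _ (fwdHom u f Pif adjf k) ≫ Pif.map (phi u X) = psi u Pif Y := by
      rw [← Adjunction.homEquiv_naturality_right, fwdHom_comp_phi, homEquiv_proj]
    have h2 := congrArg CategoryTheory.CommaMorphism.left h
    simp only [Over.comp_left] at h2
    erw [L1_obj_hom, h2]
    rfl)

/-- repackage a morphism into `L1.obj X` as a morphism in `Over A`. -/
noncomputable def bwdHom {Y : Over (Pif.obj (Over.mk u)).left} {X : Over C}
    (g : Y ⟶ (L1 u Pif).obj X) :
    Over.mk (Y.hom ≫ (Pif.obj (Over.mk u)).hom) ⟶ Pif.obj ((Over.map u).obj X) :=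
  Over.homMk g.left (by
    have hg := Over.w g
    rw [L1_obj_hom] at hg
    have h1 := Over.w (Pif.map (phi u X))
    show Over.Hom.left g ≫ _ = Y.hom ≫ (Pif.obj (Over.mk u)).hom
    erw [← h1, ← Category.assoc, hg])

lemma bwdHom_comp_proj {Y : Over (Pif.obj (Over.mk u)).left} {X : Over C}
    (g : Y ⟶ (L1 u Pif).obj X) :
    bwdHom u Pif g ≫ Pif.map (phi u X) = psi u Pif Y := by
  ext
  have hg := Over.w g
  rw [L1_obj_hom] at hg
  simp only [Over.comp_left, bwdHom, psi, Over.homMk_left]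
  exact hg

/-- backward direction of the sliced adjunction hom equivalence. -/
noncomputable def bwd {Y : Over (Pif.obj (Over.mk u)).left} {X : Over C}
    (g : Y ⟶ (L1 u Pif).obj X) : (M' u f Pif adjf).obj Y ⟶ X :=
  Over.homMk ((adjf.homEquiv _ ((Over.map u).obj X)).symm (bwdHom u Pif g)).left (by
    have h : (adjf.homEquiv _ ((Over.map u).obj X)).symm (bwdHom u Pif g) ≫ phi u X =
        (Over.pullback f).map (psi u Pif Y) ≫ adjf.counit.app (Over.mk u) := by
      have := Adjunction.homEquiv_naturality_right_symm adjf (bwdHom u Pif g) (phi u X)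
      rw [← this, bwdHom_comp_proj, Adjunction.homEquiv_counit]
    have h2 := congrArg CategoryTheory.CommaMorphism.left h
    simp only [Over.comp_left, phi, Over.homMk_left] at h2
    rw [M'_obj_hom]
    exact h2)


lemma L1_map_left {X X' : Over C} (s : X ⟶ X') :
    ((L1 u Pif).map s).left = (Pif.map ((Over.map u).map s)).left := rfl

lemma M'_map_left {Y Y' : Over (Pif.obj (Over.mk u)).left} (t : Y ⟶ Y') :
    ((M' u f Pif adjf).map t).left = ((Over.pullback f).map (theta u Pif t)).left := rfl

lemma bwd_fwd {Y : Over (Pif.obj (Over.mk u)).left} {X : Over C}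
    (k : (M' u f Pif adjf).obj Y ⟶ X) :
    bwd u f Pif adjf (fwd u f Pif adjf k) = k := by
  have h : bwdHom u Pif (fwd u f Pif adjf k) =
      adjf.homEquiv _ ((Over.map u).obj X) (fwdHom u f Pif adjf k) := by
    ext; rfl
  ext
  simp only [bwd, Over.homMk_left, h, Equiv.symm_apply_apply]
  rfl

lemma fwd_bwd {Y : Over (Pif.obj (Over.mk u)).left} {X : Over C}
    (g : Y ⟶ (L1 u Pif).obj X) :
    fwd u f Pif adjf (bwd u f Pif adjf g) = g := by
  have h : fwdHom u f Pif adjf (bwd u f Pif adjf g) =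
      (adjf.homEquiv _ ((Over.map u).obj X)).symm (bwdHom u Pif g) := by
    ext; rfl
  ext
  simp only [fwd, Over.homMk_left, h, Equiv.apply_symm_apply]
  rfl

/-- the sliced adjunction. -/
noncomputable def adjM : M' u f Pif adjf ⊣ L1 u Pif :=
  Adjunction.mkOfHomEquiv
    { homEquiv := fun Y X =>
        { toFun := fwd u f Pif adjf
          invFun := bwd u f Pif adjf
          left_inv := bwd_fwd u f Pif adjf
          right_inv := fwd_bwd u f Pif adjf }
      homEquiv_naturality_left_symm := fun {Y' Y X} t g => by
        have h : bwdHom u Pif (t ≫ g) = theta u Pif t ≫ bwdHom u Pif g := by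
          ext; rfl
        ext
        simp only [Equiv.coe_fn_symm_mk, bwd, Over.homMk_left, h,
          Adjunction.homEquiv_naturality_left_symm, Over.comp_left, M'_map_left]
        rfl
      homEquiv_naturality_right := fun {Y X X'} k s => by
        have h : fwdHom u f Pif adjf (k ≫ s) = fwdHom u f Pif adjf k ≫ (Over.map u).map s := by
          ext; rfl
        ext
        simp only [Equiv.coe_fn_mk, fwd, Over.homMk_left, h,
          Adjunction.homEquiv_naturality_right, Over.comp_left, L1_map_left]
        rfl }

/-- comparison of the two left adjoints. -/
noncomputable def isoMM' :
    Over.pullback (pullback.fst (Pif.obj (Over.mk u)).hom f) ⋙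
        Over.map ((adjf.counit.app (Over.mk u)).left) ≅ M' u f Pif adjf := by
  refine NatIso.ofComponents (fun Y =>
    Over.isoMk (pullbackRightPullbackFstIso (Pif.obj (Over.mk u)).hom f Y.hom) ?_) ?_
  · have hM : (pullbackRightPullbackFstIso (Pif.obj (Over.mk u)).hom f Y.hom).hom ≫
        ((Over.pullback f).map (psi u Pif Y)).left =
        pullback.snd Y.hom (pullback.fst (Pif.obj (Over.mk u)).hom f) := by
      apply pullback.hom_ext
      · simp [psi]
        erw [pullback.lift_fst]
        simp [pullback.condition]
      · simp
        erw [pullback.lift_snd]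
        simp
    erw [M'_obj_hom, ← Category.assoc, hM]
    simp
  · intro Y Y' t
    ext
    apply pullback.hom_ext
    · simp [theta, psi, M'_map_left]
      show (_ ≫ (pullbackRightPullbackFstIso _ _ _).hom) ≫ _ =
        ((pullbackRightPullbackFstIso _ _ _).hom ≫ _) ≫ _
      simp only [Category.assoc]
      erw [pullback.lift_fst]
      simp
      erw [pullback.lift_fst, pullback.lift_fst]
      simp
    · simp [theta, psi, M'_map_left]
      show (_ ≫ (pullbackRightPullbackFstIso _ _ _).hom) ≫ _ =
        ((pullbackRightPullbackFstIso _ _ _).hom ≫ _) ≫ _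
      simp only [Category.assoc]
      erw [pullback.lift_snd]
      simp
      erw [pullback.lift_snd_assoc, pullback.lift_snd]
      simp

/-- comparison of `Over.map u ⋙ Pif` with `L1` followed by `Over.map v`. -/
noncomputable def iso2 :
    Over.map u ⋙ Pif ≅ L1 u Pif ⋙ Over.map (Pif.obj (Over.mk u)).hom := by
  refine NatIso.ofComponents (fun X => Over.isoMk (Iso.refl _) ?_) ?_
  · have := Over.w (Pif.map (phi u X))
    simp only [Functor.comp_obj, Over.map_obj_hom, L1_obj_hom, Iso.refl_hom, Category.id_comp]
    exact (Category.id_comp _).trans this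
  · intro X X' t
    ext
    simp [L1_map_left]
    exact (Category.comp_id _).trans (Category.id_comp _).symm

end DistribAux

/-- The distributivity law in a locally cartesian closed category: given `u : C ⟶ B` and
`f : B ⟶ A`, let `v : D ⟶ A` be the dependent product `Π_f(u)` (where `Π_f` is a right adjoint
of `Over.pullback f`), let `P` be the pullback of `v` along `f`, with first projection
`q : P ⟶ D`, and let `e : P ⟶ C` be the component at `u` of the counit of `Δ_f ⊣ Π_f`.
Then there is a natural isomorphism `Π_f ∘ Σ_u ≅ Σ_v ∘ Π_q ∘ Δ_e` of functors `E/C ⥤ E/A`,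
where `Π_q` is any right adjoint of `Over.pullback q`. -/
theorem distributivity {E : Type u} [Category.{v} E] [HasFiniteLimits E]
    {A B C : E} (u : C ⟶ B) (f : B ⟶ A)
    (Pif : Over B ⥤ Over A) (adjf : Over.pullback f ⊣ Pif)
    (Piq : Over (pullback (Pif.obj (Over.mk u)).hom f) ⥤ Over (Pif.obj (Over.mk u)).left)
    (adjq : Over.pullback (pullback.fst (Pif.obj (Over.mk u)).hom f) ⊣ Piq) :
    Nonempty ((Over.map u ⋙ Pif) ≅
      (Over.pullback ((adjf.counit.app (Over.mk u)).left) ⋙ Piq ⋙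
        Over.map (Pif.obj (Over.mk u)).hom)) := by
  refine ⟨DistribAux.iso2 u Pif ≪≫ ?_⟩
  have conj := (conjugateIsoEquiv (DistribAux.adjM u f Pif adjf)
    (adjq.comp (Over.mapPullbackAdj ((adjf.counit.app (Over.mk u)).left))))
    (DistribAux.isoMM' u f Pif adjf)
  exact Functor.isoWhiskerRight conj (Over.map (Pif.obj (Over.mk u)).hom) ≪≫ Functor.associator _ _ _
end

section
/- Let f : B → A be a morphism in a locally cartesian closed category E. Morphisms g : Y → P_f(X) (where P_f(X) = Σ_{a∈A} X^{B_a}) correspond naturally in X and Y to pairs (g₁, g₂) where g₁ : Y → A and g₂ : Δ_{g₁}(B) → X, with Δ_{g₁}(B) the pullback of f along g₁. -/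
open CategoryTheory Limits Opposite

universe v u

private theorem sigma_over_ext {E : Type u} [Category.{v} E] {A : E} {P : Over A} {Y : E}
    {g₁ h₁ : Y ⟶ A} (u : Over.mk g₁ ⟶ P) (v : Over.mk h₁ ⟶ P)
    (h : g₁ = h₁) (hl : u.left = v.left) :
    (⟨g₁, u⟩ : Σ k : Y ⟶ A, (Over.mk k ⟶ P)) = ⟨h₁, v⟩ := by
  subst h
  have : u = v := by ext; exact hl
  subst this
  rfl

private noncomputable def sliceHomEquiv {E : Type u} [Category.{v} E] {A : E} (P : Over A)
    (Y : E) : (Y ⟶ P.left) ≃ Σ g₁ : Y ⟶ A, (Over.mk g₁ ⟶ P) where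
  toFun g := ⟨g ≫ P.hom, Over.homMk g⟩
  invFun p := p.2.left
  left_inv g := rfl
  right_inv := fun ⟨g₁, u⟩ => sigma_over_ext _ _ (Over.w u) rfl

/-- For a morphism `f : B ⟶ A` in a locally cartesian closed category `E`, with polynomial
extension `P_f = Σ_{A→1} ∘ Π_f ∘ Δ_{B→1} : E ⥤ E` (where `Π_f` is any right adjoint of
`Over.pullback f`), morphisms `g : Y ⟶ P_f(X)` correspond, naturally in `X` and `Y`, to pairs
`(g₁, g₂)` where `g₁ : Y ⟶ A` and `g₂ : Δ_{g₁}(B) ⟶ X`, with `Δ_{g₁}(B)` the pullback of `f`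
along `g₁`. -/
theorem polynomial_hom_equiv {E : Type u} [Category.{v} E] [HasFiniteLimits E]
    {A B : E} (f : B ⟶ A) (Pif : Over B ⥤ Over A) (adj : Over.pullback f ⊣ Pif) :
    ∃ e : ∀ (X Y : E), (Y ⟶ (Over.star B ⋙ Pif ⋙ Over.forget A).obj X) ≃
        (Σ g₁ : Y ⟶ A, (pullback g₁ f ⟶ X)),
      (∀ (X X' Y : E) (k : X ⟶ X') (g : Y ⟶ (Over.star B ⋙ Pif ⋙ Over.forget A).obj X),
        e X' Y (g ≫ (Over.star B ⋙ Pif ⋙ Over.forget A).map k) =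
          ⟨(e X Y g).1, (e X Y g).2 ≫ k⟩) ∧
      (∀ (X Y Y' : E) (m : Y' ⟶ Y) (g : Y ⟶ (Over.star B ⋙ Pif ⋙ Over.forget A).obj X),
        e X Y' (m ≫ g) = ⟨m ≫ (e X Y g).1,
          pullback.map (m ≫ (e X Y g).1) f ((e X Y g).1) f m (𝟙 B) (𝟙 A)
            (by simp) (by simp) ≫ (e X Y g).2⟩) := by
  refine ⟨fun X Y =>
    (sliceHomEquiv (Pif.obj ((Over.star B).obj X)) Y).trans
      (Equiv.sigmaCongrRight fun g₁ =>
        (adj.homEquiv (Over.mk g₁) ((Over.star B).obj X)).symm.trans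
          ((Over.forgetAdjStar B).homEquiv ((Over.pullback f).obj (Over.mk g₁)) X).symm),
    ?_, ?_⟩
  · intro X X' Y k g
    refine (Equiv.apply_eq_iff_eq_symm_apply _).mpr ?_
    simp only [Equiv.trans_apply, Equiv.symm_trans_apply, Equiv.symm_symm,
      Equiv.sigmaCongrRight_apply, Equiv.sigmaCongrRight_symm,
      sliceHomEquiv, Equiv.coe_fn_mk, Equiv.coe_fn_symm_mk]
    have h1 : ((Over.forgetAdjStar B).homEquiv
          ((Over.pullback f).obj (Over.mk (g ≫ (Pif.obj ((Over.star B).obj X)).hom))) X')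
        (((Over.forgetAdjStar B).homEquiv
            ((Over.pullback f).obj (Over.mk (g ≫ (Pif.obj ((Over.star B).obj X)).hom))) X).symm
          ((adj.homEquiv (Over.mk (g ≫ (Pif.obj ((Over.star B).obj X)).hom))
              ((Over.star B).obj X)).symm (Over.homMk g)) ≫ k) =
        ((adj.homEquiv (Over.mk (g ≫ (Pif.obj ((Over.star B).obj X)).hom))
            ((Over.star B).obj X)).symm (Over.homMk g)) ≫ (Over.star B).map k := by
      rw [Adjunction.homEquiv_naturality_right, Equiv.apply_symm_apply]
    have h2 : adj.homEquiv (Over.mk (g ≫ (Pif.obj ((Over.star B).obj X)).hom))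
          ((Over.star B).obj X')
        (((adj.homEquiv (Over.mk (g ≫ (Pif.obj ((Over.star B).obj X)).hom))
            ((Over.star B).obj X)).symm (Over.homMk g)) ≫ (Over.star B).map k) =
        (Over.homMk g : Over.mk (g ≫ (Pif.obj ((Over.star B).obj X)).hom) ⟶
            Pif.obj ((Over.star B).obj X)) ≫ Pif.map ((Over.star B).map k) := by
      rw [Adjunction.homEquiv_naturality_right, Equiv.apply_symm_apply]
    exact ((congrArg (fun t => ((adj.homEquiv (Over.mk (g ≫ (Pif.obj ((Over.star B).obj X)).hom))
      ((Over.star B).obj X')) t).left) h1).trans (congrArg (fun t => t.left) h2)).symm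
  · intro X Y Y' m g
    refine (Equiv.apply_eq_iff_eq_symm_apply _).mpr ?_
    simp only [Equiv.trans_apply, Equiv.symm_trans_apply, Equiv.symm_symm,
      Equiv.sigmaCongrRight_apply, Equiv.sigmaCongrRight_symm,
      sliceHomEquiv, Equiv.coe_fn_mk, Equiv.coe_fn_symm_mk]
    have hpb : pullback.map (m ≫ g ≫ (Pif.obj ((Over.star B).obj X)).hom) f
        (g ≫ (Pif.obj ((Over.star B).obj X)).hom) f m (𝟙 B) (𝟙 A) (by simp) (by simp) =
        (Over.forget B).map ((Over.pullback f).map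
          (Over.homMk m : Over.mk (m ≫ g ≫ (Pif.obj ((Over.star B).obj X)).hom) ⟶
            Over.mk (g ≫ (Pif.obj ((Over.star B).obj X)).hom))) := by
      apply pullback.hom_ext
      · rw [pullback.lift_fst]; exact (pullback.lift_fst _ _ _).symm
      · rw [pullback.lift_snd]; erw [pullback.lift_snd]; exact Category.comp_id _
    erw [hpb]
    have h1 : ((Over.forgetAdjStar B).homEquiv
          ((Over.pullback f).obj (Over.mk (m ≫ g ≫ (Pif.obj ((Over.star B).obj X)).hom))) X)
        ((Over.forget B).map ((Over.pullback f).map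
          (Over.homMk m : Over.mk (m ≫ g ≫ (Pif.obj ((Over.star B).obj X)).hom) ⟶
            Over.mk (g ≫ (Pif.obj ((Over.star B).obj X)).hom))) ≫
          ((Over.forgetAdjStar B).homEquiv
            ((Over.pullback f).obj (Over.mk (g ≫ (Pif.obj ((Over.star B).obj X)).hom))) X).symm
          ((adj.homEquiv (Over.mk (g ≫ (Pif.obj ((Over.star B).obj X)).hom))
              ((Over.star B).obj X)).symm (Over.homMk g))) =
        ((Over.pullback f).map
          (Over.homMk m : Over.mk (m ≫ g ≫ (Pif.obj ((Over.star B).obj X)).hom) ⟶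
            Over.mk (g ≫ (Pif.obj ((Over.star B).obj X)).hom))) ≫
        ((adj.homEquiv (Over.mk (g ≫ (Pif.obj ((Over.star B).obj X)).hom))
            ((Over.star B).obj X)).symm (Over.homMk g)) := by
      rw [Adjunction.homEquiv_naturality_left, Equiv.apply_symm_apply]
    have h2 : adj.homEquiv (Over.mk (m ≫ g ≫ (Pif.obj ((Over.star B).obj X)).hom))
          ((Over.star B).obj X)
        (((Over.pullback f).map
          (Over.homMk m : Over.mk (m ≫ g ≫ (Pif.obj ((Over.star B).obj X)).hom) ⟶
            Over.mk (g ≫ (Pif.obj ((Over.star B).obj X)).hom))) ≫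
          ((adj.homEquiv (Over.mk (g ≫ (Pif.obj ((Over.star B).obj X)).hom))
              ((Over.star B).obj X)).symm (Over.homMk g))) =
        (Over.homMk m : Over.mk (m ≫ g ≫ (Pif.obj ((Over.star B).obj X)).hom) ⟶
            Over.mk (g ≫ (Pif.obj ((Over.star B).obj X)).hom)) ≫
          (Over.homMk g : Over.mk (g ≫ (Pif.obj ((Over.star B).obj X)).hom) ⟶
            Pif.obj ((Over.star B).obj X)) := by
      rw [Adjunction.homEquiv_naturality_left, Equiv.apply_symm_apply]
    exact ((congrArg (fun t => ((adj.homEquiv (Over.mk (m ≫ g ≫ (Pif.obj ((Over.star B).obj X)).hom))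
      ((Over.star B).obj X)) t).left) h1).trans (congrArg (fun t => t.left) h2)).symm
end

section
/- Let C = (Fin/I)^op, the opposite of the category of finite sets over a fixed set I, with Ty the constant presheaf with value I, Tm the domain presheaf (A,u) ↦ A, and p : Tm → Ty given componentwise by u : A → I. Then p is a representable natural transformation: for each (A,u) and each j ∈ I, the map y(A+1, [u,j]) → y(A,u) induced by the coprojection A → A+1, together with the element ⋆ ∈ A+1, exhibits a pullback of p along j : y(A,u) → Ty. -/
open CategoryTheory Limits Opposite

universe u

/-- The category `Fin/I` of finite sets over a fixed set `I`. -/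
abbrev FinOver (I : Type u) : Type (u + 1) :=
  ObjectProperty.FullSubcategory (fun X : Over I => Finite X.left)

variable (I : Type u)

/-- The presheaf of types on `(Fin/I)ᵒᵖ`: the constant presheaf with value `I`. -/
def finTy : ((FinOver I)ᵒᵖ)ᵒᵖ ⥤ Type u :=
  (Functor.const _).obj I

/-- The presheaf of terms on `(Fin/I)ᵒᵖ`: the domain presheaf `(A, u) ↦ A`. -/
def finTm : ((FinOver I)ᵒᵖ)ᵒᵖ ⥤ Type u where
  obj X := X.unop.unop.obj.left
  map φ := TypeCat.ofHom (fun a => (φ.unop.unop).hom.left a)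

/-- The typing natural transformation, given componentwise by `u : A → I`. -/
def finP : finTm I ⟶ finTy I where
  app X := TypeCat.ofHom (fun a => X.unop.unop.obj.hom a)
  naturality X Y φ := by
    ext a
    exact ConcreteCategory.congr_hom (Over.w φ.unop.unop.hom) a

/-- The context extension of `(A, u)` by `j ∈ I`: the finite set `A ⊕ ⋆` over `I` via
`[u, j]`. -/
def finExt (X : FinOver I) (j : I) : FinOver I :=
  ⟨Over.mk (TypeCat.ofHom (Sum.elim X.obj.hom (fun _ : PUnit.{u + 1} => j) : X.obj.left ⊕ PUnit.{u + 1} → I)),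
    show Finite (X.obj.left ⊕ PUnit.{u + 1}) by have := X.property; exact inferInstance⟩

/-- The projection `(A ⊕ ⋆, [u,j]) ⟶ (A, u)` in `(Fin/I)ᵒᵖ`, induced by the left coprojection
`A → A ⊕ ⋆`. -/
def finDisp (X : FinOver I) (j : I) : op (finExt I X j) ⟶ (op X : (FinOver I)ᵒᵖ) :=
  (InducedCategory.homMk (Over.homMk (TypeCat.ofHom (Sum.inl : X.obj.left → X.obj.left ⊕ PUnit.{u + 1})) rfl) :
    X ⟶ finExt I X j).op

/-- The new variable: the added element `⋆ ∈ A ⊕ ⋆`. -/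
def finVar (X : FinOver I) (j : I) : (finTm I).obj (op (op (finExt I X j))) :=
  Sum.inr PUnit.unit

/-- Let `C = (Fin/I)ᵒᵖ`, with `Ty` the constant presheaf `I`, `Tm` the domain presheaf and
`p : Tm ⟶ Ty` given componentwise by `u : A → I`.  Then `p` is a representable natural
transformation: for each `(A, u)` and each `j ∈ I`, the morphism
`y(A+1, [u,j]) ⟶ y(A, u)` induced by the coprojection `A → A+1`, together with the element
`⋆ ∈ A+1`, exhibits a pullback of `p` along `j : y(A, u) ⟶ Ty`. -/
theorem finP_representable (X : FinOver I) (j : I) :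
    IsPullback (yonedaEquiv.symm (finVar I X j)) (yoneda.map (finDisp I X j)) (finP I)
      (yonedaEquiv.symm (j : (finTy I).obj (op (op X : ((FinOver I)ᵒᵖ))))) := by
  have w : yonedaEquiv.symm (finVar I X j) ≫ finP I =
      yoneda.map (finDisp I X j) ≫
        yonedaEquiv.symm (j : (finTy I).obj (op (op X : ((FinOver I)ᵒᵖ)))) := by
    ext Y f
    exact ConcreteCategory.congr_hom (Over.w f.unop.hom) (finVar I X j)
  refine ⟨⟨w⟩, ⟨evaluationJointlyReflectsLimits _ fun Y => ?_⟩⟩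
  apply (isLimitMapConePullbackConeEquiv ((evaluation _ _).obj Y) w).invFun
  apply (PullbackCone.isLimitEquivBijective _).invFun
  constructor
  · intro f g h
    have h1 := congrArg (fun p => p.1.1) h
    have h2 := congrArg (fun p => p.1.2) h
    apply Quiver.Hom.unop_inj
    apply InducedCategory.hom_ext
    apply Over.OverMorphism.ext
    ext b
    cases b with
    | inl b =>
      exact ConcreteCategory.congr_hom
        (congrArg (fun (k : Opposite.unop Y ⟶ (op X : (FinOver I)ᵒᵖ)) => k.unop.hom.left) h2) b
    | inr b => exact h1
  · intro x
    obtain ⟨⟨a, h⟩, hx⟩ := x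
    refine ⟨(InducedCategory.homMk (Over.homMk (TypeCat.ofHom (Sum.elim h.unop.hom.left (fun _ => a))) ?_) :
        (finExt I X j) ⟶ Y.unop.unop).op, ?_⟩
    · ext b
      cases b with
      | inl b => exact ConcreteCategory.congr_hom (Over.w h.unop.hom) b
      | inr b => exact hx
    · apply Subtype.ext
      apply Prod.ext
      · rfl
      · apply Quiver.Hom.unop_inj
        apply InducedCategory.hom_ext
        apply Over.OverMorphism.ext
        rfl
end
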